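/- Assume (D1). Then for every ζ ∈ ℝ^d, M_n(ζ) ≥ (ζᵀAζ)² / ( 4 ζᵀAζ + (2/√n) ‖ζ‖₂ · ζᵀBζ ), where A := (1/n)Σ_{i=1}^n Dh(X_i)Σ Dh(X_i)ᵀ and B := (1/n)Σ_{i=1}^n κ₁(X_i) Dh(X_i)Σ² Dh(X_i)ᵀ, with the convention that the right-hand side equals 0 when ζᵀAζ = 0. -/

import Mathlib

open MeasureTheory Matrix Filter ProbabilityTheory
open scoped BigOperators ENNReal NNReal Topology

noncomputable section

/-- The Euclidean norm `‖v‖₂` of a vector `v ∈ ℝ^k`. -/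
def enorm2 {k : ℕ} (v : Fin k → ℝ) : ℝ := Real.sqrt (∑ i, v i ^ 2)

/-- The operator norm `‖A‖₂` of a matrix with respect to Euclidean norms. -/
def opNorm2 {a b : ℕ} (A : Matrix (Fin a) (Fin b) ℝ) : ℝ :=
  sSup {r : ℝ | ∃ v : Fin b → ℝ, enorm2 v = 1 ∧ r = enorm2 (A.mulVec v)}

/-- The smallest eigenvalue `σ_min(A)` of a symmetric matrix, realized as the minimum of the
quadratic form over the unit sphere. -/
def sigmaMin {k : ℕ} (A : Matrix (Fin k) (Fin k) ℝ) : ℝ :=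
  sInf {r : ℝ | ∃ v : Fin k → ℝ, enorm2 v = 1 ∧ r = v ⬝ᵥ A.mulVec v}

/-- The squared Mahalanobis norm `‖v‖_Σ² = vᵀ Σ⁻¹ v`. -/
def mahal {m : ℕ} (S : Matrix (Fin m) (Fin m) ℝ) (v : Fin m → ℝ) : ℝ :=
  v ⬝ᵥ (S⁻¹).mulVec v

/-- The Jacobian matrix `Dh(x) ∈ ℝ^{d×m}` of `h : ℝ^m → ℝ^d` at `x`. -/
def jac {m d : ℕ} (h : (Fin m → ℝ) → (Fin d → ℝ)) (x : Fin m → ℝ) : Matrix (Fin d) (Fin m) ℝ :=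
  Matrix.of fun β γ => fderiv ℝ h x (Pi.single γ 1) β

/-- The Hessian matrix `D²h^β(x) ∈ ℝ^{m×m}` of the `β`-th component of `h` at `x`. -/
def hess {m d : ℕ} (h : (Fin m → ℝ) → (Fin d → ℝ)) (β : Fin d) (x : Fin m → ℝ) :
    Matrix (Fin m) (Fin m) ℝ :=
  Matrix.of fun i j =>
    fderiv ℝ (fun y => fderiv ℝ (fun z => h z β) y (Pi.single j 1)) x (Pi.single i 1)

/-- Assumption (CH): `0` lies in the interior of the convex hull of the range of `h`. -/
def AssumptionCH {m d : ℕ} (h : (Fin m → ℝ) → Fin d → ℝ) : Prop :=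
  (0 : Fin d → ℝ) ∈ interior (convexHull ℝ (Set.range h))

/-- Assumption (D1): `h ∈ C³` and the Jacobian is Lipschitz with modulus `κ₁`. -/
def AssumptionD1 {m d : ℕ} (h : (Fin m → ℝ) → Fin d → ℝ) (κ₁ : (Fin m → ℝ) → ℝ) : Prop :=
  ContDiff ℝ 3 h ∧ (∀ x, 0 ≤ κ₁ x) ∧
    ∀ (x Δ : Fin m → ℝ) (ζ : Fin d → ℝ),
      enorm2 (fun γ => ∑ β, ζ β * (jac h (x + Δ) β γ - jac h x β γ)) ≤
        κ₁ x * enorm2 Δ * enorm2 ζ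

/-- Assumption (D2): the Hessians are locally Lipschitz with modulus `κ₂` at scale `δ̂`. -/
def AssumptionD2 {m d : ℕ} (h : (Fin m → ℝ) → Fin d → ℝ) (κ₂ : (Fin m → ℝ) → ℝ)
    (δhat : ℝ) : Prop :=
  0 < δhat ∧ (∀ x, 0 ≤ κ₂ x) ∧
    ∀ (x Δ : Fin m → ℝ) (ζ : Fin d → ℝ), enorm2 Δ ≤ δhat →
      opNorm2 (∑ β, ζ β • (hess h β (x + Δ) - hess h β x)) ≤ κ₂ x * enorm2 Δ * enorm2 ζ

/-- Optimal transport cost with ground cost `c(x̄,x) = ‖x̄ - x‖_Σ²`. -/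
def otCost {m : ℕ} (S : Matrix (Fin m) (Fin m) ℝ) (Q P : Measure (Fin m → ℝ)) : ℝ≥0∞ :=
  ⨅ (π : Measure ((Fin m → ℝ) × (Fin m → ℝ))) (_ : IsProbabilityMeasure π)
    (_ : π.map Prod.fst = Q) (_ : π.map Prod.snd = P),
    ∫⁻ p, ENNReal.ofReal (mahal S (p.1 - p.2)) ∂π

/-- The empirical measure of the sample `X₁, …, X_n`. -/
def empMeas {m n : ℕ} (X : Fin n → Fin m → ℝ) : Measure (Fin m → ℝ) :=
  (n : ℝ≥0∞)⁻¹ • ∑ i, Measure.dirac (X i)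

/-- The Wasserstein projection value `R_n(h)`. -/
def Rn {m d n : ℕ} (S : Matrix (Fin m) (Fin m) ℝ) (h : (Fin m → ℝ) → Fin d → ℝ)
    (X : Fin n → Fin m → ℝ) : ℝ≥0∞ :=
  ⨅ (P : Measure (Fin m → ℝ)) (_ : IsProbabilityMeasure P) (_ : Integrable h P)
    (_ : (∫ x, h x ∂P) = 0), otCost S (empMeas X) P

/-- The inner objective `ζᵀ ∫₀¹ Dh(Xᵢ + n^{-1/2}Δu)Δ du − ‖Δ‖_Σ²`. -/
def innerObj {m d : ℕ} (S : Matrix (Fin m) (Fin m) ℝ) (h : (Fin m → ℝ) → Fin d → ℝ)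
    (n : ℕ) (Xi : Fin m → ℝ) (ζ : Fin d → ℝ) (Δ : Fin m → ℝ) : ℝ :=
  (∫ u in (0:ℝ)..1, ζ ⬝ᵥ (jac h (Xi + ((Real.sqrt n)⁻¹ * u) • Δ)).mulVec Δ) - mahal S Δ

/-- The dual function `M_n(ζ)`, with values in `[0,∞]`. -/
def Mn {m d n : ℕ} (S : Matrix (Fin m) (Fin m) ℝ) (h : (Fin m → ℝ) → Fin d → ℝ)
    (X : Fin n → Fin m → ℝ) (ζ : Fin d → ℝ) : ℝ≥0∞ :=
  (n : ℝ≥0∞)⁻¹ * ∑ i, ⨆ Δ : Fin m → ℝ, ENNReal.ofReal (innerObj S h n (X i) ζ Δ)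

/-- `H_n = n^{-1/2} ∑ᵢ h(Xᵢ)`. -/
def Hn {m d n : ℕ} (h : (Fin m → ℝ) → Fin d → ℝ) (X : Fin n → Fin m → ℝ) : Fin d → ℝ :=
  (Real.sqrt n)⁻¹ • ∑ i, h (X i)

/-- `𝒱_n = n⁻¹ ∑ᵢ Dh(Xᵢ) Σ Dh(Xᵢ)ᵀ`. -/
def Vn {m d n : ℕ} (S : Matrix (Fin m) (Fin m) ℝ) (h : (Fin m → ℝ) → Fin d → ℝ)
    (X : Fin n → Fin m → ℝ) : Matrix (Fin d) (Fin d) ℝ :=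
  (n : ℝ)⁻¹ • ∑ i, jac h (X i) * S * (jac h (X i))ᵀ

/-- `𝒲_n = n⁻¹ ∑ᵢ h(Xᵢ) h(Xᵢ)ᵀ`. -/
def Wn {m d n : ℕ} (h : (Fin m → ℝ) → Fin d → ℝ) (X : Fin n → Fin m → ℝ) :
    Matrix (Fin d) (Fin d) ℝ :=
  (n : ℝ)⁻¹ • ∑ i, Matrix.vecMulVec (h (X i)) (h (X i))

/-- Entry of the tensor `Dh^β(x) Σ D²h^γ(x) Σ Dh^ω(x)ᵀ`. -/
def KnE {m d : ℕ} (S : Matrix (Fin m) (Fin m) ℝ) (h : (Fin m → ℝ) → Fin d → ℝ)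
    (x : Fin m → ℝ) (β γ ω : Fin d) : ℝ :=
  jac h x β ⬝ᵥ S.mulVec ((hess h γ x).mulVec (S.mulVec (jac h x ω)))

/-- The tensor `𝒦_n`. -/
def Kn {m d n : ℕ} (S : Matrix (Fin m) (Fin m) ℝ) (h : (Fin m → ℝ) → Fin d → ℝ)
    (X : Fin n → Fin m → ℝ) (β γ ω : Fin d) : ℝ :=
  (n : ℝ)⁻¹ * ∑ i, KnE S h (X i) β γ ω

/-- `ξ_n = 𝒱_n⁻¹ H_n`. -/
def xin {m d n : ℕ} (S : Matrix (Fin m) (Fin m) ℝ) (h : (Fin m → ℝ) → Fin d → ℝ)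
    (X : Fin n → Fin m → ℝ) : Fin d → ℝ :=
  ((Vn S h X)⁻¹).mulVec (Hn h X)

/-- The quadratic term `⟨𝒱_n, ξ_n^{⊗2}⟩`. -/
def quadTerm {m d n : ℕ} (S : Matrix (Fin m) (Fin m) ℝ) (h : (Fin m → ℝ) → Fin d → ℝ)
    (X : Fin n → Fin m → ℝ) : ℝ :=
  xin S h X ⬝ᵥ (Vn S h X).mulVec (xin S h X)

/-- The cubic term `⟨𝒦_n, ξ_n^{⊗3}⟩`. -/
def cubTerm {m d n : ℕ} (S : Matrix (Fin m) (Fin m) ℝ) (h : (Fin m → ℝ) → Fin d → ℝ)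
    (X : Fin n → Fin m → ℝ) : ℝ :=
  ∑ β, ∑ γ, ∑ ω, Kn S h X β γ ω * xin S h X β * xin S h X γ * xin S h X ω

/-- The cubic form `L_n(ζ)`. -/
def Ln {m d n : ℕ} (S : Matrix (Fin m) (Fin m) ℝ) (h : (Fin m → ℝ) → Fin d → ℝ)
    (X : Fin n → Fin m → ℝ) (ζ : Fin d → ℝ) : ℝ :=
  (1/8) * ∑ β, ∑ γ, ∑ ω, ζ β * ζ γ * ζ ω * Kn S h X β γ ω

/-- `F_n(ζ) = ¼ ζᵀ𝒱_nζ + n^{-1/2} L_n(ζ)`. -/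
def Fn {m d n : ℕ} (S : Matrix (Fin m) (Fin m) ℝ) (h : (Fin m → ℝ) → Fin d → ℝ)
    (X : Fin n → Fin m → ℝ) (ζ : Fin d → ℝ) : ℝ :=
  (1/4) * (ζ ⬝ᵥ (Vn S h X).mulVec ζ) + (Real.sqrt n)⁻¹ * Ln S h X ζ

/-- The gradient `∇L_n(ζ)`. -/
def gradLn {m d n : ℕ} (S : Matrix (Fin m) (Fin m) ℝ) (h : (Fin m → ℝ) → Fin d → ℝ)
    (X : Fin n → Fin m → ℝ) (ζ : Fin d → ℝ) : Fin d → ℝ :=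
  fun β => fderiv ℝ (Ln S h X) ζ (Pi.single β 1)

/-- The population matrix `V = E[Dh(X) Σ Dh(X)ᵀ]`. -/
def VP {m d : ℕ} (S : Matrix (Fin m) (Fin m) ℝ) (h : (Fin m → ℝ) → Fin d → ℝ)
    (P : Measure (Fin m → ℝ)) : Matrix (Fin d) (Fin d) ℝ :=
  Matrix.of fun β γ => ∫ x, (jac h x * S * (jac h x)ᵀ) β γ ∂P

/-- The population matrix `W = E[h(X) h(X)ᵀ]`. -/
def WP {m d : ℕ} (h : (Fin m → ℝ) → Fin d → ℝ) (P : Measure (Fin m → ℝ)) :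
    Matrix (Fin d) (Fin d) ℝ :=
  Matrix.of fun β γ => ∫ x, h x β * h x γ ∂P

/-- `E[‖Dh(X)‖₂² κ₁(X)]`. -/
def momA {m d : ℕ} (h : (Fin m → ℝ) → Fin d → ℝ) (κ₁ : (Fin m → ℝ) → ℝ)
    (P : Measure (Fin m → ℝ)) : ℝ := ∫ x, opNorm2 (jac h x) ^ 2 * κ₁ x ∂P

/-- `E[‖Dh(X)‖₂² κ₁(X)²]`. -/
def momB {m d : ℕ} (h : (Fin m → ℝ) → Fin d → ℝ) (κ₁ : (Fin m → ℝ) → ℝ)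
    (P : Measure (Fin m → ℝ)) : ℝ := ∫ x, opNorm2 (jac h x) ^ 2 * κ₁ x ^ 2 ∂P

/-- `E[‖Dh(X)‖₂³ κ₂(X)]`. -/
def momC {m d : ℕ} (h : (Fin m → ℝ) → Fin d → ℝ) (κ₂ : (Fin m → ℝ) → ℝ)
    (P : Measure (Fin m → ℝ)) : ℝ := ∫ x, opNorm2 (jac h x) ^ 3 * κ₂ x ∂P

/-- `E[‖Dh(X)‖₂³ κ₁(X) κ₂(X)]`. -/
def momD {m d : ℕ} (h : (Fin m → ℝ) → Fin d → ℝ) (κ₁ κ₂ : (Fin m → ℝ) → ℝ)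
    (P : Measure (Fin m → ℝ)) : ℝ := ∫ x, opNorm2 (jac h x) ^ 3 * κ₁ x * κ₂ x ∂P

/-- `E[‖Dh(X)‖₂² κ₁(X)³]`. -/
def momE {m d : ℕ} (h : (Fin m → ℝ) → Fin d → ℝ) (κ₁ : (Fin m → ℝ) → ℝ)
    (P : Measure (Fin m → ℝ)) : ℝ := ∫ x, opNorm2 (jac h x) ^ 2 * κ₁ x ^ 3 ∂P

/-- `E[‖Dh(X)‖₂³ κ₁(X)² κ₂(X)]`. -/
def momF {m d : ℕ} (h : (Fin m → ℝ) → Fin d → ℝ) (κ₁ κ₂ : (Fin m → ℝ) → ℝ)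
    (P : Measure (Fin m → ℝ)) : ℝ := ∫ x, opNorm2 (jac h x) ^ 3 * κ₁ x ^ 2 * κ₂ x ∂P

/-- Condition A on the sample. -/
def CondA {m d n : ℕ} (S : Matrix (Fin m) (Fin m) ℝ) (h : (Fin m → ℝ) → Fin d → ℝ)
    (κ₁ κ₂ : (Fin m → ℝ) → ℝ) (P : Measure (Fin m → ℝ)) (X : Fin n → Fin m → ℝ) : Prop :=
  (2⁻¹ * sigmaMin (VP S h P) ≤ sigmaMin (Vn S h X)) ∧
  (enorm2 (Hn h X) ≤ 2 * Real.sqrt (Real.log n)) ∧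
  (∀ i, opNorm2 (jac h (X i)) ≤ (n : ℝ) ^ ((1 : ℝ)/4)) ∧
  (∀ i, κ₁ (X i) ≤ (n : ℝ) ^ ((1 : ℝ)/4)) ∧
  (|(n : ℝ)⁻¹ * ∑ i, opNorm2 (jac h (X i)) ^ 2 * κ₁ (X i)| ≤ 1 + momA h κ₁ P) ∧
  (|(n : ℝ)⁻¹ * ∑ i, opNorm2 (jac h (X i)) ^ 2 * κ₁ (X i) ^ 2| ≤ 1 + momB h κ₁ P) ∧
  (|(n : ℝ)⁻¹ * ∑ i, opNorm2 (jac h (X i)) ^ 3 * κ₂ (X i)| ≤ 1 + momC h κ₂ P) ∧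
  (|(n : ℝ)⁻¹ * ∑ i, opNorm2 (jac h (X i)) ^ 3 * κ₁ (X i) * κ₂ (X i)|
      ≤ Real.sqrt n + momD h κ₁ κ₂ P) ∧
  (|(n : ℝ)⁻¹ * ∑ i, opNorm2 (jac h (X i)) ^ 2 * κ₁ (X i) ^ 3| ≤ Real.sqrt n + momE h κ₁ P) ∧
  (|(n : ℝ)⁻¹ * ∑ i, opNorm2 (jac h (X i)) ^ 3 * κ₁ (X i) ^ 2 * κ₂ (X i)|
      ≤ (n : ℝ) + momF h κ₁ κ₂ P)

open Classical in
/-- The principal square root of a positive semidefinite matrix (junk value `0` otherwise). -/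
def matSqrt {k : ℕ} (A : Matrix (Fin k) (Fin k) ℝ) : Matrix (Fin k) (Fin k) ℝ :=
  if hA : A.PosSemidef then
    hA.1.eigenvectorUnitary.1 * Matrix.diagonal (fun i => Real.sqrt (hA.1.eigenvalues i)) *
      (star hA.1.eigenvectorUnitary : Matrix (Fin k) (Fin k) ℝ)
  else 0

/-- The standard Gaussian density on `ℝ^d`. -/
def gaussDensity (d : ℕ) (v : Fin d → ℝ) : ℝ :=
  (2 * Real.pi) ^ (-(d : ℝ)/2) * Real.exp (-(∑ i, v i ^ 2)/2)

/-- `F_{W,V}(z) = ∫_{vᵀW^{1/2}V⁻¹W^{1/2}v ≤ z} φ(v) dv`. -/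
def FWV {d : ℕ} (W V : Matrix (Fin d) (Fin d) ℝ) (z : ℝ) : ℝ :=
  ∫ v in {v : Fin d → ℝ | v ⬝ᵥ (matSqrt W * V⁻¹ * matSqrt W).mulVec v ≤ z}, gaussDensity d v

/-- The `(1-α)`-quantile `z_{W,V} = F_{W,V}⁻¹(1-α)`. -/
def zQuantile {d : ℕ} (α : ℝ) (W V : Matrix (Fin d) (Fin d) ℝ) : ℝ :=
  sInf {z : ℝ | 0 < z ∧ 1 - α ≤ FWV W V z}

/-- The Frobenius inner product of two square matrices. -/
def frob {k : ℕ} (A B : Matrix (Fin k) (Fin k) ℝ) : ℝ := ∑ i, ∑ j, A i j * B i j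

/-- The matrix exponential (defined entrywise by the exponential series). -/
def matExp {k : ℕ} (A : Matrix (Fin k) (Fin k) ℝ) : Matrix (Fin k) (Fin k) ℝ :=
  Matrix.of fun i j => ∑' t : ℕ, (t.factorial : ℝ)⁻¹ * (A ^ t) i j

/-- The matrix `L_{W,V}`. -/
def LWV {d : ℕ} (α : ℝ) (W V : Matrix (Fin d) (Fin d) ℝ) : Matrix (Fin d) (Fin d) ℝ :=
  Matrix.of fun j k =>
    ∫ v in {v : Fin d → ℝ | ∑ i, v i ^ 2 ≤ zQuantile α W V},
      (2 * Real.pi) ^ (-(d : ℝ)/2) *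
        Real.exp (-(v ⬝ᵥ (matSqrt V * W⁻¹ * matSqrt V).mulVec v)/2) *
        Real.sqrt (matSqrt V * W⁻¹ * matSqrt V).det *
        (-(1/2) * (v j * v k) + (1/2) * ((matSqrt V)⁻¹ * W * (matSqrt V)⁻¹) j k)

/-- The differential `d(V^{1/2} W⁻¹ V^{1/2})` in the directions `(dW, dV)`. -/
def PhiDiff {d : ℕ} (W V dW dV : Matrix (Fin d) (Fin d) ℝ) : Matrix (Fin d) (Fin d) ℝ :=
  (Matrix.of fun i j => ∫ s in Set.Ioi (0:ℝ),
      (matExp (-(s • matSqrt V)) * dV * matExp (-(s • matSqrt V))) i j) * W⁻¹ * matSqrt V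
  - matSqrt V * W⁻¹ * dW * W⁻¹ * matSqrt V
  + matSqrt V * W⁻¹ *
    (Matrix.of fun i j => ∫ s in Set.Ioi (0:ℝ),
      (matExp (-(s • matSqrt V)) * dV * matExp (-(s • matSqrt V))) i j)

/-- The linear functional `𝓛_{W,V}(dW, dV)`. -/
def calL {d : ℕ} (α : ℝ) (W V dW dV : Matrix (Fin d) (Fin d) ℝ) : ℝ :=
  frob (LWV α W V) (PhiDiff W V dW dV) / frob (LWV α W V) (matSqrt V * W⁻¹ * matSqrt V)

/-- The total variation distance between two measures. -/
def tvDist {α : Type*} [MeasurableSpace α] (P Q : Measure α) : ℝ :=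
  sSup {r : ℝ | ∃ s : Set α, MeasurableSet s ∧ r = |(P s).toReal - (Q s).toReal|}

/-- `sup_{‖t‖₂ ≥ b} |∫ exp(i tᵀ y) dP(y)|`. -/
def charAbsSup {d : ℕ} (P : Measure (Fin d → ℝ)) (b : ℝ) : ℝ :=
  sSup {r : ℝ | ∃ t : Fin d → ℝ, b ≤ enorm2 t ∧
    r = ‖∫ y, Complex.exp (Complex.I * ((t ⬝ᵥ y : ℝ) : ℂ)) ∂P‖}

/-- Cramér's condition for a measure on `ℝ^d`. -/
def CramerCond {d : ℕ} (P : Measure (Fin d → ℝ)) : Prop :=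
  ∀ b : ℝ, 0 < b → charAbsSup P b < 1

/-- Entrywise mean `E[A]` of a matrix-valued law. -/
def matMean {k : ℕ} (ν : Measure (Fin k → Fin k → ℝ)) : Matrix (Fin k) (Fin k) ℝ :=
  Matrix.of fun i j => ∫ x, x i j ∂ν

/-- Entrywise mean `E[(A - E[A])²]` of a matrix-valued law. -/
def matVar {k : ℕ} (ν : Measure (Fin k → Fin k → ℝ)) : Matrix (Fin k) (Fin k) ℝ :=
  Matrix.of fun i j => ∫ x, ((Matrix.of x - matMean ν) * (Matrix.of x - matMean ν)) i j ∂ν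

section Helpers

lemma my_ofReal_sum_le {ι : Type*} (s : Finset ι) (f : ι → ℝ) :
    ENNReal.ofReal (∑ i ∈ s, f i) ≤ ∑ i ∈ s, ENNReal.ofReal (f i) := by
  classical
  induction s using Finset.induction_on with
  | empty => simp
  | insert _ _ hx ih =>
    rw [Finset.sum_insert hx, Finset.sum_insert hx]
    exact (ENNReal.ofReal_add_le).trans (add_le_add le_rfl ih)

lemma my_enorm2_nonneg {k : ℕ} (v : Fin k → ℝ) : 0 ≤ enorm2 v := Real.sqrt_nonneg _

lemma my_enorm2_sq {k : ℕ} (v : Fin k → ℝ) : enorm2 v ^ 2 = ∑ i, v i ^ 2 :=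
  Real.sq_sqrt (by positivity)

lemma my_enorm2_smul {k : ℕ} (c : ℝ) (hc : 0 ≤ c) (v : Fin k → ℝ) :
    enorm2 (c • v) = c * enorm2 v := by
  unfold enorm2
  have : ∑ i, (c • v) i ^ 2 = c ^ 2 * ∑ i, v i ^ 2 := by
    simp [Pi.smul_apply, smul_eq_mul, mul_pow, Finset.mul_sum]
  rw [this, Real.sqrt_mul (by positivity), Real.sqrt_sq hc]

lemma my_cs {k : ℕ} (v w : Fin k → ℝ) : |∑ γ, v γ * w γ| ≤ enorm2 v * enorm2 w := by
  have h := Finset.sum_mul_sq_le_sq_mul_sq Finset.univ v w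
  have h2 : |∑ γ, v γ * w γ| = Real.sqrt ((∑ γ, v γ * w γ) ^ 2) :=
    (Real.sqrt_sq_eq_abs _).symm
  rw [h2, enorm2, enorm2, ← Real.sqrt_mul (by positivity)]
  exact Real.sqrt_le_sqrt h

lemma my_sum_mulVec {k n : ℕ} (M : Fin n → Matrix (Fin k) (Fin k) ℝ) (v : Fin k → ℝ) :
    (∑ i, M i) *ᵥ v = ∑ i, (M i) *ᵥ v := by
  ext x
  simp only [Matrix.mulVec, dotProduct, Finset.sum_apply, Matrix.sum_apply,
    Finset.sum_mul]
  exact Finset.sum_comm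

lemma my_dot_sum {k n : ℕ} (v : Fin k → ℝ) (u : Fin n → Fin k → ℝ) :
    v ⬝ᵥ (∑ i, u i) = ∑ i, v ⬝ᵥ u i := by
  simp only [dotProduct, Finset.sum_apply, Finset.mul_sum]
  exact Finset.sum_comm

/-- `ζᵀ (J M Jᵀ) ζ = wᵀ M w` with `w = Jᵀ ζ`. -/
lemma my_quad_eq {m d : ℕ} (J : Matrix (Fin d) (Fin m) ℝ) (M : Matrix (Fin m) (Fin m) ℝ)
    (ζ : Fin d → ℝ) :
    ζ ⬝ᵥ (J * M * Jᵀ).mulVec ζ = (Jᵀ.mulVec ζ) ⬝ᵥ M.mulVec (Jᵀ.mulVec ζ) := by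
  rw [← Matrix.mulVec_mulVec, ← Matrix.mulVec_mulVec, Matrix.dotProduct_mulVec,
    ← Matrix.mulVec_transpose]

lemma my_SS_eq {m : ℕ} (S : Matrix (Fin m) (Fin m) ℝ) (hS : S.IsSymm) (w : Fin m → ℝ) :
    w ⬝ᵥ (S * S).mulVec w = (S.mulVec w) ⬝ᵥ (S.mulVec w) := by
  rw [← Matrix.mulVec_mulVec, Matrix.dotProduct_mulVec, ← Matrix.mulVec_transpose, hS]

lemma my_dot_self_nonneg {k : ℕ} (v : Fin k → ℝ) : 0 ≤ v ⬝ᵥ v :=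
  Finset.sum_nonneg fun i _ => mul_self_nonneg _

/-- Key per-sample lower bound: plugging `Δ = t · S Dh(x)ᵀ ζ` into the inner objective. -/
lemma my_innerObj_lower {m d : ℕ} (S : Matrix (Fin m) (Fin m) ℝ) (hSsymm : S.IsSymm)
    (hSpd : S.PosDef) (h : (Fin m → ℝ) → Fin d → ℝ) (κ₁ : (Fin m → ℝ) → ℝ)
    (hD1 : AssumptionD1 h κ₁) (n : ℕ) (x : Fin m → ℝ) (ζ : Fin d → ℝ)
    (t : ℝ) (ht : 0 ≤ t) :
    t * (ζ ⬝ᵥ (jac h x * S * (jac h x)ᵀ).mulVec ζ)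
      - t ^ 2 * ((ζ ⬝ᵥ (jac h x * S * (jac h x)ᵀ).mulVec ζ)
          + (Real.sqrt n)⁻¹ * κ₁ x * enorm2 ζ *
              (ζ ⬝ᵥ (jac h x * (S * S) * (jac h x)ᵀ).mulVec ζ) / 2)
      ≤ innerObj S h n x ζ (t • S.mulVec ((jac h x)ᵀ.mulVec ζ)) := by
  classical
  set w : Fin m → ℝ := (jac h x)ᵀ.mulVec ζ with hw
  set Δ : Fin m → ℝ := t • S.mulVec w with hΔ
  set c : ℝ := (Real.sqrt n)⁻¹ with hc
  have hc0 : 0 ≤ c := by positivity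
  have ha : ζ ⬝ᵥ (jac h x * S * (jac h x)ᵀ).mulVec ζ = w ⬝ᵥ S.mulVec w := my_quad_eq _ _ _
  have hs : ζ ⬝ᵥ (jac h x * (S * S) * (jac h x)ᵀ).mulVec ζ = w ⬝ᵥ (S * S).mulVec w :=
    my_quad_eq _ _ _
  -- squared Euclidean norm of Δ
  have hΔsq : enorm2 Δ ^ 2 = t ^ 2 * (w ⬝ᵥ (S * S).mulVec w) := by
    rw [hΔ, my_enorm2_smul t ht, mul_pow, my_enorm2_sq, my_SS_eq S hSsymm]
    congr 1
    simp [dotProduct, sq]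
  -- Mahalanobis norm of Δ
  have hdet : IsUnit S.det := hSpd.det_pos.ne'.isUnit
  have hkey : ∀ u : Fin m → ℝ, S⁻¹ *ᵥ (S *ᵥ u) = u := by
    intro u
    rw [Matrix.mulVec_mulVec, Matrix.nonsing_inv_mul S hdet, Matrix.one_mulVec]
  have hmahal : mahal S Δ = t ^ 2 * (w ⬝ᵥ S.mulVec w) := by
    unfold mahal
    rw [hΔ, Matrix.mulVec_smul, smul_dotProduct, dotProduct_smul,
      hkey w, dotProduct_comm, smul_eq_mul, smul_eq_mul]
    ring
  -- the integrand
  set F : ℝ → ℝ := fun u => ζ ⬝ᵥ (jac h (x + ((Real.sqrt n)⁻¹ * u) • Δ)).mulVec Δ with hF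
  have hbase : ζ ⬝ᵥ (jac h x).mulVec Δ = t * (w ⬝ᵥ S.mulVec w) := by
    rw [Matrix.dotProduct_mulVec, ← Matrix.mulVec_transpose, ← hw, hΔ,
      dotProduct_smul, smul_eq_mul]
  set K : ℝ := c * κ₁ x * enorm2 ζ * enorm2 Δ ^ 2 with hK
  -- continuity of the integrand
  have hfd : Continuous (fderiv ℝ h) := hD1.1.continuous_fderiv (by norm_num)
  have hent : ∀ (γ : Fin m) (β : Fin d), Continuous fun y => jac h y β γ := by
    intro γ β
    have h1 : Continuous fun y => fderiv ℝ h y (Pi.single γ 1) :=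
      hfd.clm_apply continuous_const
    exact (continuous_apply β).comp h1
  have hpt : Continuous fun u : ℝ => x + (c * u) • Δ :=
    continuous_const.add ((continuous_const.mul continuous_id).smul continuous_const)
  have hcont : Continuous F := by
    rw [hF]
    simp only [← hc, dotProduct, Matrix.mulVec]
    apply continuous_finset_sum
    intro β _
    exact continuous_const.mul
      (continuous_finset_sum _ fun γ _ => ((hent γ β).comp hpt).mul continuous_const)
  -- pointwise lower bound
  have hptwise : ∀ u ∈ Set.Icc (0:ℝ) 1,
      ζ ⬝ᵥ (jac h x).mulVec Δ - K * u ≤ F u := by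
    intro u hu
    have hcu : 0 ≤ c * u := mul_nonneg hc0 hu.1
    set v : Fin m → ℝ :=
      fun γ => ∑ β, ζ β * (jac h (x + (c * u) • Δ) β γ - jac h x β γ) with hvdef
    have hv : enorm2 v ≤ κ₁ x * ((c * u) * enorm2 Δ) * enorm2 ζ := by
      have hh := hD1.2.2 x ((c * u) • Δ) ζ
      rwa [my_enorm2_smul _ hcu] at hh
    have habs : |∑ γ, v γ * Δ γ| ≤ enorm2 v * enorm2 Δ := my_cs v Δ
    have hdiff : ∑ γ, v γ * Δ γ = F u - ζ ⬝ᵥ (jac h x).mulVec Δ := by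
      rw [hF]
      simp only [← hc, dotProduct, Matrix.mulVec]
      rw [← Finset.sum_sub_distrib]
      calc ∑ γ, v γ * Δ γ
          = ∑ γ, ∑ β, ζ β * (jac h (x + (c * u) • Δ) β γ - jac h x β γ) * Δ γ := by
            refine Finset.sum_congr rfl fun γ _ => ?_
            rw [hvdef, Finset.sum_mul]
        _ = ∑ β, ∑ γ, ζ β * (jac h (x + (c * u) • Δ) β γ - jac h x β γ) * Δ γ :=
            Finset.sum_comm
        _ = _ := by
            refine Finset.sum_congr rfl fun β _ => ?_
            simp only [dotProduct, Finset.mul_sum, ← Finset.sum_sub_distrib]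
            refine Finset.sum_congr rfl fun γ _ => by ring
    have h2 : enorm2 v * enorm2 Δ ≤ K * u := by
      calc enorm2 v * enorm2 Δ
          ≤ (κ₁ x * ((c * u) * enorm2 Δ) * enorm2 ζ) * enorm2 Δ :=
            mul_le_mul_of_nonneg_right hv (my_enorm2_nonneg Δ)
        _ = K * u := by rw [hK]; ring
    have h3 := neg_abs_le (∑ γ, v γ * Δ γ)
    linarith [habs, h2, h3, hdiff.symm]
  -- integrate the bound
  have hint : ∫ u in (0:ℝ)..1, (ζ ⬝ᵥ (jac h x).mulVec Δ - K * u) ≤ ∫ u in (0:ℝ)..1, F u :=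
    intervalIntegral.integral_mono_on zero_le_one
      ((continuous_const.sub (continuous_const.mul continuous_id)).intervalIntegrable _ _)
      (hcont.intervalIntegrable _ _) hptwise
  have hval : ∫ u in (0:ℝ)..1, (ζ ⬝ᵥ (jac h x).mulVec Δ - K * u)
      = ζ ⬝ᵥ (jac h x).mulVec Δ - K / 2 := by
    rw [intervalIntegral.integral_sub (intervalIntegrable_const)
        ((by fun_prop : Continuous fun u : ℝ => K * u).intervalIntegrable _ _),
      intervalIntegral.integral_const, intervalIntegral.integral_const_mul, integral_id]
    norm_num
    ring
  -- conclude
  rw [ha, hs]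
  show _ ≤ (∫ u in (0:ℝ)..1, F u) - mahal S Δ
  have heq : t * (w ⬝ᵥ S.mulVec w)
      - t ^ 2 * ((w ⬝ᵥ S.mulVec w) + c * κ₁ x * enorm2 ζ * (w ⬝ᵥ (S * S).mulVec w) / 2)
      = (ζ ⬝ᵥ (jac h x).mulVec Δ - K / 2) - mahal S Δ := by
    rw [hbase, hmahal, hK, hΔsq]; ring
  rw [heq, ← hval]
  exact sub_le_sub_right hint _

end Helpers

/-- Under (D1), for every `ζ ∈ ℝ^d`,
`M_n(ζ) ≥ (ζᵀAζ)² / ( 4 ζᵀAζ + (2/√n) ‖ζ‖₂ · ζᵀBζ )`, where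
`A = (1/n)Σᵢ Dh(Xᵢ)Σ Dh(Xᵢ)ᵀ` and `B = (1/n)Σᵢ κ₁(Xᵢ) Dh(Xᵢ)Σ² Dh(Xᵢ)ᵀ`
(with the convention that the right-hand side is `0` when `ζᵀAζ = 0`, matching Lean's
convention that division by zero is zero). -/
theorem Mn_quadratic_lower_bound
    (m d : ℕ) (hm : 1 ≤ m) (hd : 1 ≤ d)
    (S : Matrix (Fin m) (Fin m) ℝ) (hSsymm : S.IsSymm) (hSpd : S.PosDef)
    (h : (Fin m → ℝ) → Fin d → ℝ) (κ₁ : (Fin m → ℝ) → ℝ) (hD1 : AssumptionD1 h κ₁)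
    (n : ℕ) (hn : 1 ≤ n) (X : Fin n → Fin m → ℝ) (ζ : Fin d → ℝ) :
    ENNReal.ofReal ((ζ ⬝ᵥ (Vn S h X).mulVec ζ) ^ 2 /
        (4 * (ζ ⬝ᵥ (Vn S h X).mulVec ζ) +
          2 / Real.sqrt n * enorm2 ζ *
            (ζ ⬝ᵥ ((n : ℝ)⁻¹ •
              ∑ i, κ₁ (X i) • (jac h (X i) * (S * S) * (jac h (X i))ᵀ)).mulVec ζ)))
      ≤ Mn S h X ζ := by
  classical
  have hnpos : (0:ℝ) < n := by exact_mod_cast hn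
  set a : Fin n → ℝ := fun i => ζ ⬝ᵥ (jac h (X i) * S * (jac h (X i))ᵀ).mulVec ζ with ha_def
  set s : Fin n → ℝ := fun i => ζ ⬝ᵥ (jac h (X i) * (S * S) * (jac h (X i))ᵀ).mulVec ζ
    with hs_def
  have ha_nonneg : ∀ i, 0 ≤ a i := by
    intro i
    simp only [ha_def]
    rw [my_quad_eq]
    have := hSpd.posSemidef.dotProduct_mulVec_nonneg ((jac h (X i))ᵀ.mulVec ζ)
    simpa using this
  have hs_nonneg : ∀ i, 0 ≤ s i := by
    intro i
    simp only [hs_def]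
    rw [my_quad_eq, my_SS_eq S hSsymm]
    exact my_dot_self_nonneg _
  have hA : ζ ⬝ᵥ (Vn S h X).mulVec ζ = (n:ℝ)⁻¹ * ∑ i, a i := by
    unfold Vn
    rw [Matrix.smul_mulVec, dotProduct_smul, my_sum_mulVec, my_dot_sum,
      smul_eq_mul]
  have hB : ζ ⬝ᵥ (((n : ℝ)⁻¹ •
        ∑ i, κ₁ (X i) • (jac h (X i) * (S * S) * (jac h (X i))ᵀ))).mulVec ζ
      = (n:ℝ)⁻¹ * ∑ i, κ₁ (X i) * s i := by
    rw [Matrix.smul_mulVec, dotProduct_smul, my_sum_mulVec, my_dot_sum,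
      smul_eq_mul]
    congr 1
    refine Finset.sum_congr rfl fun i _ => ?_
    rw [Matrix.smul_mulVec, dotProduct_smul, smul_eq_mul]
  set A : ℝ := ζ ⬝ᵥ (Vn S h X).mulVec ζ with hAdef
  set B : ℝ := ζ ⬝ᵥ (((n : ℝ)⁻¹ •
      ∑ i, κ₁ (X i) • (jac h (X i) * (S * S) * (jac h (X i))ᵀ))).mulVec ζ with hBdef
  have hA0 : 0 ≤ A := by
    rw [hA]
    exact mul_nonneg (inv_nonneg.mpr hnpos.le) (Finset.sum_nonneg fun i _ => ha_nonneg i)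
  have hB0 : 0 ≤ B := by
    rw [hB]
    exact mul_nonneg (inv_nonneg.mpr hnpos.le)
      (Finset.sum_nonneg fun i _ => mul_nonneg (hD1.2.1 _) (hs_nonneg i))
  rcases eq_or_lt_of_le hA0 with hA_eq | hA_pos
  · rw [← hA_eq]
    simp only [ne_eq, OfNat.ofNat_ne_zero, not_false_eq_true, zero_pow, zero_div,
      ENNReal.ofReal_zero]
    exact zero_le ..
  · have hc0 : 0 ≤ (Real.sqrt (n:ℝ))⁻¹ := by positivity
    set C : ℝ := A + (Real.sqrt n)⁻¹ * enorm2 ζ * B / 2 with hCdef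
    have hC2 : 0 ≤ (Real.sqrt (n:ℝ))⁻¹ * enorm2 ζ * B / 2 :=
      div_nonneg (mul_nonneg (mul_nonneg hc0 (my_enorm2_nonneg ζ)) hB0) (by norm_num)
    have hCpos : 0 < C := by rw [hCdef]; linarith
    set t : ℝ := A / (2 * C) with htdef
    have ht0 : 0 ≤ t := div_nonneg hA0 (by linarith)
    have hden : 4 * A + 2 / Real.sqrt n * enorm2 ζ * B = 4 * C := by
      rw [hCdef, div_eq_mul_inv]; ring
    have hRHS : A ^ 2 / (4 * A + 2 / Real.sqrt n * enorm2 ζ * B) = t * A - t ^ 2 * C := by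
      rw [hden, htdef]
      field_simp
      ring
    rw [hRHS]
    have hkey : ∀ i, ENNReal.ofReal
        (t * a i - t ^ 2 * (a i + (Real.sqrt n)⁻¹ * κ₁ (X i) * enorm2 ζ * s i / 2))
        ≤ ⨆ Δ : Fin m → ℝ, ENNReal.ofReal (innerObj S h n (X i) ζ Δ) := by
      intro i
      refine le_trans (ENNReal.ofReal_le_ofReal ?_)
        (le_iSup (fun Δ => ENNReal.ofReal (innerObj S h n (X i) ζ Δ))
          (t • S.mulVec ((jac h (X i))ᵀ.mulVec ζ)))
      simpa only [ha_def, hs_def] using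
        my_innerObj_lower S hSsymm hSpd h κ₁ hD1 n (X i) ζ t ht0
    set g : Fin n → ℝ := fun i =>
      t * a i - t ^ 2 * (a i + (Real.sqrt n)⁻¹ * κ₁ (X i) * enorm2 ζ * s i / 2) with hg
    have hsum : (n:ℝ)⁻¹ * ∑ i, g i = t * A - t ^ 2 * C := by
      have e1 : ∀ i, g i = t * a i - t ^ 2 * a i
          - (t ^ 2 * ((Real.sqrt (n:ℝ))⁻¹ * enorm2 ζ) / 2) * (κ₁ (X i) * s i) := fun i => by
        simp only [hg]; ring
      rw [Finset.sum_congr rfl fun i _ => e1 i, Finset.sum_sub_distrib,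
        Finset.sum_sub_distrib, ← Finset.mul_sum, ← Finset.mul_sum, ← Finset.mul_sum]
      rw [hCdef, hA, hB]
      ring
    calc ENNReal.ofReal (t * A - t ^ 2 * C)
        = ENNReal.ofReal ((n:ℝ)⁻¹ * ∑ i, g i) := by rw [hsum]
      _ = ENNReal.ofReal ((n:ℝ)⁻¹) * ENNReal.ofReal (∑ i, g i) :=
          ENNReal.ofReal_mul (inv_nonneg.mpr hnpos.le)
      _ ≤ ENNReal.ofReal ((n:ℝ)⁻¹) * ∑ i, ENNReal.ofReal (g i) :=
          mul_le_mul_right (my_ofReal_sum_le _ _) _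
      _ ≤ ENNReal.ofReal ((n:ℝ)⁻¹) *
            ∑ i, ⨆ Δ : Fin m → ℝ, ENNReal.ofReal (innerObj S h n (X i) ζ Δ) :=
          mul_le_mul_right (Finset.sum_le_sum fun i _ => hkey i) _
      _ = Mn S h X ζ := by
          unfold Mn
          congr 1
          rw [ENNReal.ofReal_inv_of_pos hnpos, ENNReal.ofReal_natCast]

end
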